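/- For every binary word w there exists a unique 1-prefix normal word w' with |w'| = |w| such that F₁(w', k) = F₁(w, k) for all 0 ≤ k ≤ |w|. -/

import Mathlib

/-- Number of 1s in the length-`k` prefix of `w`. -/
def P1 (w : List Bool) (k : ℕ) : ℕ := (w.take k).count true

/-- Maximum number of 1s in a factor (contiguous substring) of `w` of length `k`. -/
def F1 (w : List Bool) (k : ℕ) : ℕ :=
  (Finset.range (w.length - k + 1)).sup fun i => ((w.drop i).take k).count true

/-- `w` is 1-prefix normal: `P₁(w,k) = F₁(w,k)` for all `k ≤ |w|`. -/
def IsPrefixNormal1 (w : List Bool) : Prop :=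
  ∀ k ≤ w.length, P1 w k = F1 w k

/-- Variant of `F1` with the index range not depending on `k`. -/
def G1 (w : List Bool) (k : ℕ) : ℕ :=
  (Finset.range (w.length + 1)).sup fun i => ((w.drop i).take k).count true

lemma P1_add (w : List Bool) (i k : ℕ) :
    P1 w (i + k) = P1 w i + ((w.drop i).take k).count true := by
  unfold P1
  rw [List.take_add, List.count_append]

lemma G1_eq_F1 (w : List Bool) (k : ℕ) (hk : k ≤ w.length) : F1 w k = G1 w k := by
  apply le_antisymm
  · exact Finset.sup_mono (Finset.range_subset_range.mpr (by omega))
  · apply Finset.sup_le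
    intro i hi
    simp only [Finset.mem_range] at hi
    rcases le_or_gt i (w.length - k) with h | h
    · exact Finset.le_sup (f := fun i => ((w.drop i).take k).count true)
        (Finset.mem_range.mpr (by omega))
    · -- i > length - k : factor is a suffix of the last full factor
      have hj : w.length - k ∈ Finset.range (w.length - k + 1) := by
        simp
      refine le_trans ?_ (Finset.le_sup (f := fun i => ((w.drop i).take k).count true) hj)
      have h1 : ((w.drop i).take k).count true ≤ (w.drop i).count true :=
        (List.take_sublist _ _).count_le _
      have h2 : w.drop i = (w.drop (w.length - k)).drop (i - (w.length - k)) := by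
        rw [List.drop_drop]; congr 1; omega
      have h3 : (w.drop (w.length - k)).take k = w.drop (w.length - k) := by
        apply List.take_of_length_le
        rw [List.length_drop]; omega
      show ((w.drop i).take k).count true ≤ ((w.drop (w.length - k)).take k).count true
      rw [h3]
      refine h1.trans ?_
      rw [h2]
      exact (List.drop_sublist _ _).count_le _

lemma G1_mono (w : List Bool) {k k' : ℕ} (h : k ≤ k') : G1 w k ≤ G1 w k' := by
  apply Finset.sup_mono_fun
  intro i _
  exact (List.take_sublist_take_left h).count_le _

lemma G1_zero (w : List Bool) : G1 w 0 = 0 := by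
  unfold G1
  simp

lemma G1_subadd (w : List Bool) (a b : ℕ) : G1 w (a + b) ≤ G1 w a + G1 w b := by
  apply Finset.sup_le
  intro i hi
  simp only [Finset.mem_range] at hi
  have key : ((w.drop i).take (a + b)).count true
      = ((w.drop i).take a).count true + ((w.drop (i + a)).take b).count true := by
    rw [List.take_add, List.count_append, List.drop_drop]
  rw [key]
  have h1 : ((w.drop i).take a).count true ≤ G1 w a :=
    Finset.le_sup (f := fun i => ((w.drop i).take a).count true)
      (Finset.mem_range.mpr (by omega))
  have h2 : ((w.drop (i + a)).take b).count true ≤ G1 w b := by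
    rcases le_or_gt (i + a) w.length with h | h
    · exact Finset.le_sup (f := fun i => ((w.drop i).take b).count true)
        (Finset.mem_range.mpr (by omega))
    · rw [List.drop_eq_nil_of_le (by omega)]
      simp
  omega

lemma G1_one_le (w : List Bool) : G1 w 1 ≤ 1 := by
  apply Finset.sup_le
  intro i _
  calc ((w.drop i).take 1).count true ≤ ((w.drop i).take 1).length :=
        List.count_le_length
    _ ≤ 1 := List.length_take_le _ _

lemma G1_succ_le (w : List Bool) (k : ℕ) : G1 w (k + 1) ≤ G1 w k + 1 :=
  (G1_subadd w k 1).trans (by have := G1_one_le w; omega)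

/-- The canonical prefix-normal word associated to `w`. -/
def pnf (w : List Bool) : List Bool :=
  (List.range w.length).map fun i => decide (G1 w i < G1 w (i + 1))

lemma pnf_length (w : List Bool) : (pnf w).length = w.length := by
  simp [pnf]

lemma P1_pnf (w : List Bool) : ∀ k ≤ w.length, P1 (pnf w) k = G1 w k := by
  intro k hk
  induction k with
  | zero => simp [P1, G1_zero]
  | succ n ih =>
    have hn : n ≤ w.length := by omega
    have hget : (pnf w)[n]? = some (decide (G1 w n < G1 w (n + 1))) := by
      rw [pnf, List.getElem?_map, List.getElem?_range (by omega)]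
      rfl
    have hmono : G1 w n ≤ G1 w (n + 1) := G1_mono w (by omega)
    have hstep := G1_succ_le w n
    have ihn := ih hn
    unfold P1 at ihn ⊢
    rw [List.take_succ, List.count_append, hget, ihn]
    by_cases h : G1 w n < G1 w (n + 1)
    · rw [decide_eq_true h]
      have h1 : List.count true (some true).toList = 1 := rfl
      rw [h1]; omega
    · rw [decide_eq_false h]
      have h1 : List.count true (some false).toList = 0 := rfl
      rw [h1]; omega

lemma P1_pnf' (w : List Bool) (m : ℕ) : P1 (pnf w) m = G1 w (min m w.length) := by
  rcases le_or_gt m w.length with h | h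
  · rw [min_eq_left h]; exact P1_pnf w m h
  · rw [min_eq_right h.le]
    have : P1 (pnf w) m = P1 (pnf w) w.length := by
      unfold P1
      rw [List.take_of_length_le (by rw [pnf_length]; omega),
          List.take_of_length_le (by rw [pnf_length])]
    rw [this]
    exact P1_pnf w w.length le_rfl

lemma G1_pnf (w : List Bool) (k : ℕ) (hk : k ≤ w.length) : G1 (pnf w) k = G1 w k := by
  apply le_antisymm
  · apply Finset.sup_le
    intro i hi
    simp only [Finset.mem_range, pnf_length] at hi
    have key := P1_add (pnf w) i k
    rw [P1_pnf' w (i + k), P1_pnf' w i, show min i w.length = i by omega] at key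
    have h1 : G1 w (min (i + k) w.length) ≤ G1 w (i + k) :=
      G1_mono w (min_le_left _ _)
    have h2 := G1_subadd w i k
    omega
  · have h0 : (((pnf w).drop 0).take k).count true = P1 (pnf w) k := by
      simp [P1]
    calc G1 w k = P1 (pnf w) k := (P1_pnf w k hk).symm
      _ = (((pnf w).drop 0).take k).count true := h0.symm
      _ ≤ G1 (pnf w) k :=
        Finset.le_sup (f := fun i => (((pnf w).drop i).take k).count true)
          (Finset.mem_range.mpr (by omega))

lemma eq_of_P1 : ∀ (v u : List Bool), v.length = u.length →
    (∀ k ≤ v.length, P1 v k = P1 u k) → v = u := by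
  intro v
  induction v with
  | nil => intro u h _; exact (List.eq_nil_of_length_eq_zero h.symm).symm
  | cons a v' ih =>
    intro u hlen hP
    cases u with
    | nil => simp at hlen
    | cons b u' =>
      have h1 := hP 1 (by simp)
      have hab : a = b := by
        simp only [P1, List.take_succ_cons, List.take_zero] at h1
        cases a <;> cases b <;> simp_all
      subst hab
      have hlen' : v'.length = u'.length := by simpa using hlen
      have hP' : ∀ k ≤ v'.length, P1 v' k = P1 u' k := by
        intro k hk
        have := hP (k + 1) (by simp; omega)
        simp only [P1, List.take_succ_cons, List.count_cons] at this ⊢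
        omega
      rw [ih u' hlen' hP']

theorem stmt_1 (w : List Bool) :
    ∃! w' : List Bool, w'.length = w.length ∧ IsPrefixNormal1 w' ∧
      ∀ k ≤ w.length, F1 w' k = F1 w k := by
  refine ⟨pnf w, ⟨pnf_length w, ?_, ?_⟩, ?_⟩
  · intro k hk
    rw [pnf_length] at hk
    rw [G1_eq_F1 _ k (by rw [pnf_length]; exact hk), G1_pnf w k hk]
    exact P1_pnf w k hk
  · intro k hk
    rw [G1_eq_F1 _ k (by rw [pnf_length]; exact hk), G1_pnf w k hk, G1_eq_F1 w k hk]
  · rintro v ⟨hlen, hpn, hF⟩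
    apply eq_of_P1 v (pnf w) (by rw [hlen, pnf_length])
    intro k hk
    rw [hlen] at hk
    have h1 : P1 v k = F1 v k := hpn k (by rw [hlen]; exact hk)
    have h2 : F1 v k = F1 w k := hF k hk
    have h3 : P1 (pnf w) k = G1 w k := P1_pnf w k hk
    rw [h1, h2, h3, G1_eq_F1 w k hk]
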